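/- A pair of finite sequences of integers all ≥ 2 is complementary if and only if it can be obtained from the pair ((2), (2)) by finitely many moves of the following two types: replace ((a_1, …, a_m), (b_1, …, b_n)) by ((a_1, …, a_{m−1}, a_m + 1), (b_1, …, b_n, 2)), or replace it by ((a_1, …, a_m, 2), (b_1, …, b_{n−1}, b_n + 1)). (Equivalently: repeatedly blowing down the −1 in linear graphs of the form (−a_1, …, −a_m, −1, −b_n, …, −b_1) with (a), (b) complementary eventually reaches (−2, −1, −2).) -/

import Mathlib

/-- Negative continued fraction `[a₁, …, aₙ]⁻`. -/
def ncf : List ℚ → ℚ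
  | [] => 0
  | [a] => a
  | a :: b :: l => a - 1 / ncf (b :: l)

/-- Negative continued fraction of a list of integers. -/
def ncfZ (l : List ℤ) : ℚ := ncf (l.map (fun x => (x : ℚ)))

/-- Two sequences of integers, all ≥ 2, are complementary if the reciprocals of their
negative continued fractions sum to 1. -/
def Complementary (a b : List ℤ) : Prop :=
  a ≠ [] ∧ b ≠ [] ∧ (∀ x ∈ a, 2 ≤ x) ∧ (∀ x ∈ b, 2 ≤ x) ∧
    1 / ncfZ a + 1 / ncfZ b = 1

/-- The standard negative definite bilinear form on `ℤ^N`. -/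
def negForm {N : ℕ} (x y : Fin N → ℤ) : ℤ := -∑ i, x i * y i

/-- Pairs of sequences obtainable from the pair ((2),(2)) by the two blow-up moves. -/
inductive BlowupPair : List ℤ → List ℤ → Prop
  | base : BlowupPair [2] [2]
  | left (a b : List ℤ) (ha : a ≠ []) (h : BlowupPair a b) :
      BlowupPair (a.dropLast ++ [a.getLast ha + 1]) (b ++ [2])
  | right (a b : List ℤ) (hb : b ≠ []) (h : BlowupPair a b) :
      BlowupPair (a ++ [2]) (b.dropLast ++ [b.getLast hb + 1])

def cfP : List ℤ → ℤ × ℤ × ℤ × ℤ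
  | [] => (1, 0, 0, 1)
  | x :: l =>
    (x * (cfP l).1 - (cfP l).2.1, (cfP l).1, x * (cfP l).2.2.1 - (cfP l).2.2.2, (cfP l).2.2.1)

@[simp] lemma cfP_nil : cfP [] = (1, 0, 0, 1) := rfl

lemma cfP_cons (x : ℤ) (l : List ℤ) :
    cfP (x :: l) =
      (x * (cfP l).1 - (cfP l).2.1, (cfP l).1, x * (cfP l).2.2.1 - (cfP l).2.2.2, (cfP l).2.2.1) :=
  rfl

lemma cfP_det (l : List ℤ) :
    (cfP l).1 * (cfP l).2.2.2 - (cfP l).2.1 * (cfP l).2.2.1 = 1 := by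
  induction l with
  | nil => simp
  | cons x l ih => simp only [cfP_cons]; ring_nf; ring_nf at ih; linarith

lemma cfP_concat (l : List ℤ) (y : ℤ) :
    cfP (l ++ [y]) = (y * (cfP l).1 + (cfP l).2.2.1, y * (cfP l).2.1 + (cfP l).2.2.2,
      -(cfP l).1, -(cfP l).2.1) := by
  induction l with
  | nil => simp [cfP]
  | cons x l ih => simp only [List.cons_append, cfP_cons, ih]; ring_nf

@[simp] lemma ncfZ_singleton (x : ℤ) : ncfZ [x] = x := by simp [ncfZ, ncf]

lemma ncfZ_cons_cons (x y : ℤ) (l : List ℤ) :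
    ncfZ (x :: y :: l) = x - 1 / ncfZ (y :: l) := rfl

lemma cfP_bounds (l : List ℤ) (h : l ≠ []) (h2 : ∀ x ∈ l, 2 ≤ x) :
    1 ≤ (cfP l).2.1 ∧ (cfP l).2.1 + 1 ≤ (cfP l).1 ∧ 1 ≤ (cfP l).1 + (cfP l).2.2.1 ∧
      0 ≤ (cfP l).2.1 + (cfP l).2.2.2 ∧
      (cfP l).2.1 + (cfP l).2.2.2 ≤ (cfP l).1 + (cfP l).2.2.1 ∧
      (cfP l).2.2.1 + 1 ≤ (cfP l).2.2.2 ∧ (cfP l).2.2.1 ≤ -1 ∧ (cfP l).2.2.2 ≤ 0 := by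
  induction l using List.reverseRecOn with
  | nil => exact absurd rfl h
  | append_singleton l y ih =>
    have hy : 2 ≤ y := h2 y (by simp)
    rcases eq_or_ne l [] with rfl | hl
    · simp [cfP]; omega
    · have hb := ih hl (fun x hx => h2 x (by simp [hx]))
      obtain ⟨b1, b2, b3, b4, b5, b6, b7, b8⟩ := hb
      rw [cfP_concat]
      set p := (cfP l).1; set q := (cfP l).2.1; set r := (cfP l).2.2.1; set s := (cfP l).2.2.2
      simp only
      refine ⟨?_, ?_, ?_, ?_, ?_, ?_, ?_, ?_⟩
      · nlinarith
      · nlinarith [mul_le_mul_of_nonneg_left (by linarith : q + 1 ≤ p) (by linarith : (0:ℤ) ≤ y)]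
      · nlinarith
      · nlinarith
      · nlinarith [mul_le_mul_of_nonneg_left (by linarith : q ≤ p) (by linarith : (0:ℤ) ≤ y - 2)]
      · omega
      · omega
      · omega

lemma ncfZ_eq (l : List ℤ) (h : l ≠ []) (h2 : ∀ x ∈ l, 2 ≤ x) :
    ncfZ l = ((cfP l).1 : ℚ) / ((cfP l).2.1 : ℚ) := by
  induction l with
  | nil => exact absurd rfl h
  | cons x l ih =>
    rcases eq_or_ne l [] with rfl | hl
    · simp [cfP]
    · obtain ⟨y, t, rfl⟩ := List.exists_cons_of_ne_nil hl
      have hb := cfP_bounds (y :: t) (by simp) (fun z hz => h2 z (by simp at hz ⊢; tauto))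
      have hp : (0:ℤ) < (cfP (y :: t)).1 := by omega
      have hpq : ((cfP (y :: t)).1 : ℚ) ≠ 0 := by exact_mod_cast hp.ne'
      have hc1 : ((cfP (x :: y :: t)).1 : ℚ)
          = x * ((cfP (y :: t)).1 : ℚ) - ((cfP (y :: t)).2.1 : ℚ) := by
        rw [cfP_cons]; push_cast; ring
      have hc2 : ((cfP (x :: y :: t)).2.1 : ℚ) = ((cfP (y :: t)).1 : ℚ) := by
        rw [cfP_cons]
      rw [ncfZ_cons_cons, ih (by simp) (fun z hz => h2 z (by simp at hz ⊢; tauto)),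
        one_div_div, hc1, hc2]
      field_simp

lemma compl_symm {a b : List ℤ} (h : Complementary a b) : Complementary b a := by
  obtain ⟨h1, h2, h3, h4, h5⟩ := h
  exact ⟨h2, h1, h4, h3, by linarith⟩

lemma blow_symm {a b : List ℤ} (h : BlowupPair a b) : BlowupPair b a := by
  induction h with
  | base => exact .base
  | left a b ha h ih => exact .right b a ha ih
  | right a b hb h ih => exact .left b a hb ih

lemma compl_of_eq (a b : List ℤ) (ha : a ≠ []) (hb : b ≠ []) (h2a : ∀ x ∈ a, 2 ≤ x)
    (h2b : ∀ x ∈ b, 2 ≤ x) (h1 : (cfP a).1 = (cfP b).1)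
    (h2 : (cfP a).2.1 + (cfP b).2.1 = (cfP a).1) : Complementary a b := by
  refine ⟨ha, hb, h2a, h2b, ?_⟩
  have hba := cfP_bounds a ha h2a
  have hpa : ((cfP a).1 : ℚ) ≠ 0 := by
    have : (0:ℤ) < (cfP a).1 := by omega
    exact_mod_cast this.ne'
  rw [ncfZ_eq a ha h2a, ncfZ_eq b hb h2b, one_div_div, one_div_div, ← h1, ← add_div]
  rw [div_eq_one_iff_eq hpa]
  exact_mod_cast h2

lemma key_id (p qA rA sA pB qB rB sB : ℤ) (dA : p * sA - qA * rA = 1)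
    (dB : pB * sB - qB * rB = 1) (F1 : p = pB) (F2 : qA + qB = p) (F3 : rA + rB = -p)
    (hp : p ≠ 0) : qA + sA - sB + rB = 0 := by
  have h : p * (qA + sA - sB + rB) = 0 := by
    linear_combination dA - dB - sB * F1 - rB * F2 + qA * F3
  rcases mul_eq_zero.mp h with h | h
  · exact absurd h hp
  · exact h

lemma key_dvd (p qA rA sA qB rB sB : ℤ) (dA : p * sA - qA * rA = 1)
    (dB : p * sB - qB * rB = 1) (F2 : qA + qB = p) (b1 : 1 ≤ -rA) (b2 : -rA ≤ p - 1)
    (b3 : 1 ≤ -rB) (b4 : -rB ≤ p - 1) (hp : 2 ≤ p) : rA + rB = -p := by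
  have hco : IsCoprime p qA := ⟨sA, -rA, by linarith⟩
  have hqq : qA * (-rA - rB) = p * (-rB + sB - sA) := by
    linear_combination dA - dB - rB * F2
  have hdvd : p ∣ -rA - rB := hco.dvd_of_dvd_mul_left ⟨_, hqq⟩
  obtain ⟨k, hk⟩ := hdvd
  have h2k : 2 ≤ p * k := by linarith
  have h2k' : p * k ≤ 2 * p - 2 := by linarith
  have hk1 : k = 1 := by
    by_contra hne
    rcases lt_or_gt_of_ne hne with hlt | hgt
    · have : p * k ≤ 0 := mul_nonpos_of_nonneg_of_nonpos (by linarith) (by omega)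
      linarith
    · have : 2 * p ≤ p * k := by nlinarith
      linarith
  rw [hk1, mul_one] at hk
  omega

lemma compl_facts (a b : List ℤ) (h : Complementary a b) :
    (cfP a).1 = (cfP b).1 ∧ (cfP a).2.1 + (cfP b).2.1 = (cfP a).1 ∧
      (cfP a).2.2.1 + (cfP b).2.2.1 = -(cfP a).1 := by
  obtain ⟨ha, hb, h2a, h2b, hv⟩ := h
  obtain ⟨a1, a2, a3, a4, a5, a6, a7, a8⟩ := cfP_bounds a ha h2a
  obtain ⟨c1, c2, c3, c4, c5, c6, c7, c8⟩ := cfP_bounds b hb h2b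
  have hdA := cfP_det a
  have hdB := cfP_det b
  have hpa0 : (0:ℤ) < (cfP a).1 := by omega
  have hpb0 : (0:ℤ) < (cfP b).1 := by omega
  have hpa : ((cfP a).1 : ℚ) ≠ 0 := by exact_mod_cast hpa0.ne'
  have hpb : ((cfP b).1 : ℚ) ≠ 0 := by exact_mod_cast hpb0.ne'
  have hint : (cfP a).2.1 * (cfP b).1 + (cfP b).2.1 * (cfP a).1 = (cfP a).1 * (cfP b).1 := by
    rw [ncfZ_eq a ha h2a, ncfZ_eq b hb h2b, one_div_div, one_div_div] at hv
    field_simp at hv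
    rw [mul_comm (cfP b).2.1]; exact_mod_cast hv
  have hcoA : IsCoprime ((cfP a).1) ((cfP a).2.1) :=
    ⟨(cfP a).2.2.2, -(cfP a).2.2.1, by linarith⟩
  have hcoB : IsCoprime ((cfP b).1) ((cfP b).2.1) :=
    ⟨(cfP b).2.2.2, -(cfP b).2.2.1, by linarith⟩
  have h1 : (cfP a).1 ∣ (cfP b).1 :=
    hcoA.dvd_of_dvd_mul_right ⟨(cfP b).1 - (cfP b).2.1, by linear_combination hint⟩
  have h2 : (cfP b).1 ∣ (cfP a).1 :=
    hcoB.dvd_of_dvd_mul_right ⟨(cfP a).1 - (cfP a).2.1, by linear_combination hint⟩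
  have hAB : (cfP a).1 = (cfP b).1 := Int.dvd_antisymm hpa0.le hpb0.le h1 h2
  have hq : (cfP a).2.1 + (cfP b).2.1 = (cfP a).1 :=
    mul_left_cancel₀ hpa0.ne'
      (by linear_combination hint + ((cfP a).2.1 - (cfP a).1) * hAB)
  have hdB' : (cfP a).1 * (cfP b).2.2.2 - (cfP b).2.1 * (cfP b).2.2.1 = 1 := by
    rw [hAB]; exact hdB
  have hr := key_dvd ((cfP a).1) ((cfP a).2.1) ((cfP a).2.2.1) ((cfP a).2.2.2)
    ((cfP b).2.1) ((cfP b).2.2.1) ((cfP b).2.2.2) hdA hdB' hq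
    (by omega) (by omega) (by omega) (by linarith) (by omega)
  exact ⟨hAB, hq, hr⟩

lemma compl_left (a b : List ℤ) (h : Complementary a b) (ha : a ≠ []) :
    Complementary (a.dropLast ++ [a.getLast ha + 1]) (b ++ [2]) := by
  obtain ⟨hF1, hF2, hF3⟩ := compl_facts a b h
  obtain ⟨-, hb, h2a, h2b, -⟩ := h
  have hx2 : 2 ≤ a.getLast ha := h2a _ (List.getLast_mem ha)
  have hax : a.dropLast ++ [a.getLast ha] = a := List.dropLast_append_getLast ha
  set x := a.getLast ha with hxdef
  set p0 := (cfP a.dropLast).1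
  set q0 := (cfP a.dropLast).2.1
  set r0 := (cfP a.dropLast).2.2.1
  set s0 := (cfP a.dropLast).2.2.2
  have hA : cfP a = (x * p0 + r0, x * q0 + s0, -p0, -q0) := by
    rw [← hax, cfP_concat]
  obtain ⟨b1, b2, b3, b4, b5, b6, b7, b8⟩ := cfP_bounds b hb h2b
  have hdA := cfP_det a
  have hdB := cfP_det b
  rw [hA] at hF1 hF2 hF3 hdA
  simp only at hF1 hF2 hF3 hdA
  have hp0 : (0:ℤ) < (cfP b).1 := by omega
  have hdB' : (cfP b).1 * (-q0) - (x * q0 + s0) * (-p0) = 1 := by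
    rw [← hF1]; linear_combination hdA
  have key : (cfP b).2.1 + (cfP b).2.2.2 - (-q0) + (-p0) = 0 :=
    key_id ((cfP b).1) ((cfP b).2.1) ((cfP b).2.2.1) ((cfP b).2.2.2) ((cfP b).1)
      (x * q0 + s0) (-p0) (-q0) hdB hdB' rfl (by linarith) (by linarith) hp0.ne'
  have hna : cfP (a.dropLast ++ [x + 1]) = ((x + 1) * p0 + r0, (x + 1) * q0 + s0, -p0, -q0) :=
    cfP_concat _ _
  have hnb : cfP (b ++ [2]) = (2 * (cfP b).1 + (cfP b).2.2.1, 2 * (cfP b).2.1 + (cfP b).2.2.2,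
      -(cfP b).1, -(cfP b).2.1) := cfP_concat _ _
  apply compl_of_eq _ _ (by simp) (by simp)
  · intro z hz
    rcases List.mem_append.mp hz with hz | hz
    · exact h2a z (List.dropLast_subset a hz)
    · simp at hz; omega
  · intro z hz
    rcases List.mem_append.mp hz with hz | hz
    · exact h2b z hz
    · simp at hz; omega
  · rw [hna, hnb]
    simp only
    linear_combination 2 * hF1 - hF3
  · rw [hna, hnb]
    simp only
    linear_combination hF2 + key

lemma cfP_bounds0 (l : List ℤ) (h2 : ∀ x ∈ l, 2 ≤ x) :
    1 ≤ (cfP l).1 ∧ 0 ≤ (cfP l).2.1 ∧ (cfP l).2.1 + 1 ≤ (cfP l).1 ∧ (cfP l).2.2.1 ≤ 0 ∧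
      1 ≤ (cfP l).1 + (cfP l).2.2.1 := by
  rcases eq_or_ne l [] with rfl | hl
  · simp
  · obtain ⟨a1, a2, a3, a4, a5, a6, a7, a8⟩ := cfP_bounds l hl h2
    omega

lemma bwd {a b : List ℤ} (h : BlowupPair a b) : Complementary a b := by
  induction h with
  | base =>
    refine ⟨by simp, by simp, ?_, ?_, ?_⟩ <;> simp <;> norm_num
  | left a b ha h ih => exact compl_left a b ih ha
  | right a b hb h ih => exact compl_symm (compl_left b a (compl_symm ih) hb)

lemma fwd_step (a b : List ℤ) (h : Complementary a b) (ha : a ≠ []) (hb : b ≠ [])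
    (hx : 3 ≤ a.getLast ha) (hy : b.getLast hb = 2)
    (hrec : ∀ a' b' : List ℤ, Complementary a' b' → (cfP a').1 < (cfP a).1 →
      BlowupPair a' b') :
    BlowupPair a b := by
  obtain ⟨hF1, hF2, hF3⟩ := compl_facts a b h
  obtain ⟨-, -, h2a, h2b, -⟩ := h
  have hax : a.dropLast ++ [a.getLast ha] = a := List.dropLast_append_getLast ha
  have hbx : b.dropLast ++ [(2:ℤ)] = b := by
    conv_rhs => rw [← List.dropLast_append_getLast hb, hy]
  set x := a.getLast ha with hxdef
  set p0 := (cfP a.dropLast).1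
  set q0 := (cfP a.dropLast).2.1
  set r0 := (cfP a.dropLast).2.2.1
  set s0 := (cfP a.dropLast).2.2.2
  set P0 := (cfP b.dropLast).1
  set Q0 := (cfP b.dropLast).2.1
  set R0 := (cfP b.dropLast).2.2.1
  set S0 := (cfP b.dropLast).2.2.2
  have hA : cfP a = (x * p0 + r0, x * q0 + s0, -p0, -q0) := by
    rw [← hax, cfP_concat]
  have hB : cfP b = (2 * P0 + R0, 2 * Q0 + S0, -P0, -Q0) := by
    rw [← hbx, cfP_concat]
  obtain ⟨a01, a02, a03, a04, a05⟩ := cfP_bounds0 a.dropLast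
    (fun z hz => h2a z (List.dropLast_subset a hz))
  have h2b0 : ∀ z ∈ b.dropLast, 2 ≤ z := fun z hz => h2b z (List.dropLast_subset b hz)
  obtain ⟨b01, b02, b03, b04, b05⟩ := cfP_bounds0 b.dropLast h2b0
  have hdA := cfP_det a
  have hdB := cfP_det b
  rw [hA] at hF1 hF2 hF3 hdA
  rw [hB] at hF1 hF2 hF3 hdB
  simp only at hF1 hF2 hF3 hdA hdB
  have hpA : 3 ≤ x * p0 + r0 := by nlinarith
  -- b.dropLast is nonempty
  have hb0 : b.dropLast ≠ [] := by
    intro hemp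
    rw [hemp] at hbx
    have : cfP b = cfP [(2:ℤ)] := by rw [← hbx]; rfl
    rw [hB] at this
    simp [cfP] at this
    omega
  -- the reduced pair
  have hdB' : (x * p0 + r0) * (-Q0) - (2 * Q0 + S0) * (-P0) = 1 := by
    rw [hF1]; linear_combination hdB
  have key : (x * q0 + s0) + (-q0) - (-Q0) + (-P0) = 0 :=
    key_id (x * p0 + r0) (x * q0 + s0) (-p0) (-q0) (2 * P0 + R0) (2 * Q0 + S0)
      (-P0) (-Q0) hdA hdB hF1 hF2 hF3 (by omega)
  have hna : cfP (a.dropLast ++ [x - 1])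
      = ((x - 1) * p0 + r0, (x - 1) * q0 + s0, -p0, -q0) := by
    rw [cfP_concat]
  have hcompl : Complementary (a.dropLast ++ [x - 1]) b.dropLast := by
    apply compl_of_eq _ _ (by simp) hb0
    · intro z hz
      rcases List.mem_append.mp hz with hz | hz
      · exact h2a z (List.dropLast_subset a hz)
      · simp at hz; omega
    · exact h2b0
    · rw [hna]; simp only; linear_combination hF3
    · rw [hna]; simp only; linear_combination key - hF3
  have hlt : (cfP (a.dropLast ++ [x - 1])).1 < (cfP a).1 := by
    rw [hna, hA]; simp only; nlinarith
  have hblow := hrec _ _ hcompl hlt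
  have hne : a.dropLast ++ [x - 1] ≠ [] := by simp
  have hmove := BlowupPair.left (a.dropLast ++ [x - 1]) b.dropLast hne hblow
  have hg : (a.dropLast ++ [x - 1]).getLast hne = x - 1 := List.getLast_concat
  rw [hg, List.dropLast_concat, sub_add_cancel, hax, hbx] at hmove
  exact hmove

lemma concat_p_bounds (l : List ℤ) (x : ℤ) (hx : 2 ≤ x) (h2 : ∀ z ∈ l, 2 ≤ z) :
    (3 ≤ x → 2 * (cfP l).1 + 1 ≤ (cfP (l ++ [x])).1) ∧
    (x = 2 → (cfP (l ++ [x])).1 ≤ 2 * (cfP l).1) ∧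
    (x = 2 → l ≠ [] → (cfP (l ++ [x])).1 + 1 ≤ 2 * (cfP l).1) ∧
    (l = [] → (cfP (l ++ [x])).1 = x) ∧ 2 ≤ (cfP (l ++ [x])).1 := by
  simp only [cfP_concat]
  rcases eq_or_ne l [] with rfl | hl
  · simp only [cfP_nil]
    refine ⟨fun h3 => by omega, fun h2' => by omega, fun _ he => absurd rfl he,
      fun _ => by ring, by omega⟩
  · obtain ⟨c1, c2, c3, c4, c5, c6, c7, c8⟩ := cfP_bounds l hl h2
    refine ⟨fun h3 => by nlinarith, fun h2' => by subst h2'; omega,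
      fun h2' _ => by subst h2'; omega, fun he => absurd he hl, by nlinarith⟩

lemma fwd : ∀ (n : ℕ) (a b : List ℤ), (cfP a).1.toNat ≤ n → Complementary a b →
    BlowupPair a b := by
  intro n
  induction n with
  | zero =>
    intro a b hn h
    obtain ⟨ha, hb, h2a, h2b, -⟩ := h
    obtain ⟨a1, a2, -⟩ := cfP_bounds a ha h2a
    omega
  | succ n ih =>
    intro a b hn h
    have hF := compl_facts a b h
    obtain ⟨ha, hb, h2a, h2b, -⟩ := id h
    obtain ⟨as, x, rfl⟩ : ∃ as x, a = as ++ [x] :=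
      ⟨a.dropLast, a.getLast ha, (List.dropLast_append_getLast ha).symm⟩
    obtain ⟨bs, y, rfl⟩ : ∃ bs y, b = bs ++ [y] :=
      ⟨b.dropLast, b.getLast hb, (List.dropLast_append_getLast hb).symm⟩
    have hx2 : 2 ≤ x := h2a x (by simp)
    have hy2 : 2 ≤ y := h2b y (by simp)
    have h2as : ∀ z ∈ as, 2 ≤ z := fun z hz => h2a z (by simp [hz])
    have h2bs : ∀ z ∈ bs, 2 ≤ z := fun z hz => h2b z (by simp [hz])
    obtain ⟨sa1, sa2, sa3, sa4, sa5⟩ := concat_p_bounds as x hx2 h2as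
    obtain ⟨sb1, sb2, sb3, sb4, sb5⟩ := concat_p_bounds bs y hy2 h2bs
    have hpa : (cfP (as ++ [x])).1 = x * (cfP as).1 + (cfP as).2.2.1 := by rw [cfP_concat]
    have hpb : (cfP (bs ++ [y])).1 = y * (cfP bs).1 + (cfP bs).2.2.1 := by rw [cfP_concat]
    have hra : (cfP (as ++ [x])).2.2.1 = -(cfP as).1 := by rw [cfP_concat]
    have hrb : (cfP (bs ++ [y])).2.2.1 = -(cfP bs).1 := by rw [cfP_concat]
    have hpp : (cfP (as ++ [x])).1 = (cfP (bs ++ [y])).1 := hF.1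
    have hsum : (cfP as).1 + (cfP bs).1 = (cfP (as ++ [x])).1 := by
      have := hF.2.2
      rw [hra, hrb] at this
      omega
    by_cases hx3 : x = 2
    · by_cases hy3 : y = 2
      · -- both last entries are 2 : must be the base pair
        rcases eq_or_ne as [] with rfl | hase
        · have hpa2 : (cfP ([(2:ℤ)] : List ℤ)).1 = 2 := by simp [cfP]
          have hP1 : (cfP bs).1 = 1 := by
            have h1 := sa4 rfl
            rw [hx3] at h1
            have := hsum
            simp only [cfP_nil] at this
            omega
          have hbse : bs = [] := by
            rcases eq_or_ne bs [] with rfl | hbse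
            · rfl
            · obtain ⟨c1, c2, -⟩ := cfP_bounds bs hbse h2bs
              omega
          subst hbse hx3 hy3
          simpa using BlowupPair.base
        · exfalso
          have hbse : bs ≠ [] := by
            intro hbse
            have h1 := sb4 hbse
            rw [hy3] at h1
            subst hbse
            simp only [cfP_nil] at hsum
            obtain ⟨c1, c2, c3, c4, c5, c6, c7, c8⟩ := cfP_bounds as hase h2as
            omega
          have h1 := sa3 hx3 hase
          have h2 := sb3 hy3 hbse
          omega
      · -- x = 2, y ≥ 3 : swap
        have hyg : 3 ≤ (bs ++ [y]).getLast (by simp) := by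
          rw [List.getLast_concat]; omega
        have hxg : (as ++ [x]).getLast (by simp) = 2 := by
          rw [List.getLast_concat]; exact hx3
        exact blow_symm (fwd_step _ _ (compl_symm h) (by simp) (by simp) hyg hxg
          (fun a' b' hc hm => ih a' b' (by omega) hc))
    · -- x ≥ 3
      have hy3 : y = 2 := by
        by_contra hy3
        have h1 := sa1 (by omega)
        have h2 := sb1 (by omega)
        omega
      have hxg : 3 ≤ (as ++ [x]).getLast (by simp) := by
        rw [List.getLast_concat]; omega
      have hyg : (bs ++ [y]).getLast (by simp) = 2 := by
        rw [List.getLast_concat]; exact hy3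
      exact fwd_step _ _ h (by simp) (by simp) hxg hyg
        (fun a' b' hc hm => ih a' b' (by omega) hc)

theorem complementary_iff_blowupPair (a b : List ℤ) :
    Complementary a b ↔ BlowupPair a b := by
  constructor
  · exact fun h => fwd ((cfP a).1.toNat) a b le_rfl h
  · exact bwd
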